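/- Suppose 0 < ε ≤ 1 and W = {W_1, W_2, …} is a countable collection of bipartite graphons, where each W_i is (A_i, B_i)-bipartite, such that ∫_{[0,1]²} min(1, Σ_i W_i(x,y)) dx dy ≥ 1 − ε. Then Σ_i m(A_i ∪ B_i) ≥ log₂(1/ε). -/

import Mathlib

open MeasureTheory Set
open scoped ENNReal

namespace GH

open scoped Classical

noncomputable def μ : Measure ℝ := volume.restrict (Icc 0 1)

lemma μ_univ : μ univ = 1 := by
  simp [μ, Real.volume_Icc]

instance : IsProbabilityMeasure μ := ⟨μ_univ⟩

lemma μ_le_vol (S : Set ℝ) : μ S ≤ volume S := by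
  simpa [μ] using Measure.restrict_le_self (μ := volume) (s := Icc (0:ℝ) 1) S

/-- Integrability of bounded measurable functions w.r.t. a finite measure. -/
lemma integrable_of_bdd {g : ℝ → ℝ} {ν : Measure ℝ} [IsFiniteMeasure ν]
    (hg : Measurable g) (C : ℝ) (h : ∀ x, |g x| ≤ C) : Integrable g ν :=
  (integrable_const C).mono' hg.aestronglyMeasurable (Filter.Eventually.of_forall h)

/-- Tangent-line bound for the logarithm. -/
lemma log_tangent {u v : ℝ} (hu : 0 < u) (hv : 0 < v) :
    Real.log u ≤ Real.log v + (u - v) / v := by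
  have h := Real.log_le_sub_one_of_pos (x := u / v) (by positivity)
  have hlog : Real.log (u / v) = Real.log u - Real.log v := Real.log_div (ne_of_gt hu) (ne_of_gt hv)
  rw [hlog] at h
  have : u / v - 1 = (u - v) / v := by field_simp
  linarith [this ▸ h]

section core

variable {n : ℕ} (A B : Fin n → Set ℝ)

/-- The set of points surviving the choice `s` (for each `i`, side `s i` is killed). -/
def Zs (s : Fin n → Bool) : Set ℝ := ⋂ i, (cond (s i) (B i) (A i))ᶜ

/-- `φ x = 2^(d(x) - n)` where `d(x)` is the number of `i` with `x ∈ A i ∪ B i`. -/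
noncomputable def φ (x : ℝ) : ℝ := ∏ i, if x ∈ A i ∪ B i then (1:ℝ) else 2⁻¹

/-- `η x = 2^(n - d(x))`, the number of `s` with `x ∈ Zs s`. -/
noncomputable def η (x : ℝ) : ℝ := ∏ i, if x ∈ A i ∪ B i then (1:ℝ) else 2

/-- The set of compatible pairs. -/
def Cpair : Set (ℝ × ℝ) := (⋃ i, (A i ×ˢ B i ∪ B i ×ˢ A i))ᶜ

lemma mem_Cpair {p : ℝ × ℝ} :
    p ∈ Cpair A B ↔ ∀ i, ¬(p.1 ∈ A i ∧ p.2 ∈ B i) ∧ ¬(p.1 ∈ B i ∧ p.2 ∈ A i) := by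
  simp [Cpair, Set.mem_prod, not_or]

variable {A B}

lemma measurable_φ (hA : ∀ i, MeasurableSet (A i)) (hB : ∀ i, MeasurableSet (B i)) :
    Measurable (φ A B) := by
  apply Finset.measurable_prod
  intro i _
  exact Measurable.ite ((hA i).union (hB i)) measurable_const measurable_const

lemma φ_pos (x : ℝ) : 0 < φ A B x := by
  apply Finset.prod_pos
  intro i _
  split <;> norm_num

lemma φ_le_one (x : ℝ) : φ A B x ≤ 1 := by
  apply Finset.prod_le_one
  · intro i _; split <;> norm_num
  · intro i _; split <;> norm_num

lemma φ_ge (x : ℝ) : (2⁻¹ : ℝ) ^ n ≤ φ A B x := by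
  have : (2⁻¹ : ℝ) ^ n = ∏ _i : Fin n, (2⁻¹ : ℝ) := by
    rw [Finset.prod_const, Finset.card_univ, Fintype.card_fin]
  rw [this]
  apply Finset.prod_le_prod
  · intro i _; norm_num
  · intro i _; split <;> norm_num

lemma φ_mul_η (x : ℝ) : φ A B x * η A B x = 1 := by
  rw [φ, η, ← Finset.prod_mul_distrib]
  apply Finset.prod_eq_one
  intro i _
  split <;> norm_num

lemma measurable_Zs (hA : ∀ i, MeasurableSet (A i)) (hB : ∀ i, MeasurableSet (B i))
    (s : Fin n → Bool) : MeasurableSet (Zs A B s) := by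
  apply MeasurableSet.iInter
  intro i
  cases h : s i <;> simp only [h, Bool.cond_false, Bool.cond_true] <;>
    [exact (hA i).compl; exact (hB i).compl]

lemma measurable_Cpair (hA : ∀ i, MeasurableSet (A i)) (hB : ∀ i, MeasurableSet (B i)) :
    MeasurableSet (Cpair A B) := by
  apply MeasurableSet.compl
  apply MeasurableSet.iUnion
  intro i
  exact (((hA i).prod (hB i)).union ((hB i).prod (hA i)))

/-- Key combinatorial identity: the number of `s` with `x ∈ Zs s` equals `η x`. -/
lemma sum_indicator_Zs (hd : ∀ i, Disjoint (A i) (B i)) (x : ℝ) :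
    ∑ s : Fin n → Bool, (Zs A B s).indicator (fun _ => (1:ℝ)) x = η A B x := by
  have key : ∀ s : Fin n → Bool, (Zs A B s).indicator (fun _ => (1:ℝ)) x
      = ∏ i, (if x ∈ cond (s i) (B i) (A i) then (0:ℝ) else 1) := by
    intro s
    by_cases hx : x ∈ Zs A B s
    · rw [Set.indicator_of_mem hx]
      rw [Zs, Set.mem_iInter] at hx
      rw [eq_comm]
      apply Finset.prod_eq_one
      intro i _
      simpa using hx i
    · rw [Set.indicator_of_notMem hx]
      rw [Zs, Set.mem_iInter] at hx
      push_neg at hx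
      obtain ⟨i, hi⟩ := hx
      rw [eq_comm]
      apply Finset.prod_eq_zero (Finset.mem_univ i)
      simp only [Set.notMem_compl_iff] at hi
      simp [hi]
  simp only [key]
  have := Finset.prod_univ_sum (fun _ : Fin n => (Finset.univ : Finset Bool))
    (fun i b => if x ∈ cond b (B i) (A i) then (0:ℝ) else 1)
  rw [Fintype.piFinset_univ] at this
  rw [← this]
  rw [η]
  apply Finset.prod_congr rfl
  intro i _
  rw [Fintype.sum_bool]
  by_cases hxa : x ∈ A i <;> by_cases hxb : x ∈ B i
  · exact absurd ((hd i).ne_of_mem hxa hxb) (by simp)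
  · simp [hxa, hxb]
  · simp [hxa, hxb]
  · simp only [Bool.cond_true, Bool.cond_false]
    rw [if_neg hxb, if_neg hxa, if_neg (by simp [hxa, hxb])]
    norm_num

/-- If `x ∈ Zs s` then every `y ∈ Zs s` is compatible with `x`. -/
lemma Zs_subset_sect {s : Fin n → Bool} {x : ℝ} (hx : x ∈ Zs A B s) :
    Zs A B s ⊆ {y : ℝ | (x, y) ∈ Cpair A B} := by
  intro y hy
  rw [Set.mem_setOf_eq, mem_Cpair]
  rw [Zs, Set.mem_iInter] at hx hy
  intro i
  constructor
  · rintro ⟨hxa, hyb⟩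
    cases hsi : s i
    · exact hx i (by simp [hsi, hxa])
    · exact hy i (by simp [hsi, hyb])
  · rintro ⟨hxb, hya⟩
    cases hsi : s i
    · exact hy i (by simp [hsi, hya])
    · exact hx i (by simp [hsi, hxb])

/-- `P s` : weighted measure of `Zs s`. -/
noncomputable def Pw (A B : Fin n → Set ℝ) (s : Fin n → Bool) : ℝ := ∫ x in Zs A B s, φ A B x ∂μ

/-- `M s` : measure of `Zs s`. -/
noncomputable def Mw (A B : Fin n → Set ℝ) (s : Fin n → Bool) : ℝ := (μ (Zs A B s)).toReal

lemma abs_logφ_le (x : ℝ) : |Real.log (φ A B x)| ≤ n * Real.log 2 := by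
  have h1 : Real.log (φ A B x) ≤ 0 :=
    Real.log_nonpos (le_of_lt (φ_pos (A := A) (B := B) x)) (φ_le_one (A := A) (B := B) x)
  have h2 : -(n * Real.log 2) ≤ Real.log (φ A B x) := by
    have := Real.log_le_log (by positivity) (φ_ge (A := A) (B := B) x)
    rw [Real.log_pow, Real.log_inv] at this
    calc -(n * Real.log 2) = (n : ℝ) * (-Real.log 2) := by ring
    _ ≤ Real.log (φ A B x) := this
  rw [abs_le]
  constructor <;> linarith

lemma integrable_φ (hA : ∀ i, MeasurableSet (A i)) (hB : ∀ i, MeasurableSet (B i)) :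
    Integrable (φ A B) μ :=
  integrable_of_bdd (measurable_φ hA hB) 1
    (fun x => abs_le.mpr ⟨by linarith [φ_pos (A := A) (B := B) x], φ_le_one (A := A) (B := B) x⟩)

lemma Pw_nonneg (hA : ∀ i, MeasurableSet (A i)) (hB : ∀ i, MeasurableSet (B i))
    (s : Fin n → Bool) : 0 ≤ Pw A B s :=
  setIntegral_nonneg (measurable_Zs hA hB s) (fun x _ => le_of_lt (φ_pos (A := A) (B := B) x))

lemma Pw_le_Mw (hA : ∀ i, MeasurableSet (A i)) (hB : ∀ i, MeasurableSet (B i))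
    (s : Fin n → Bool) : Pw A B s ≤ Mw A B s := by
  have h : ∫ x in Zs A B s, φ A B x ∂μ ≤ ∫ _x in Zs A B s, (1:ℝ) ∂μ :=
    setIntegral_mono ((integrable_φ hA hB).integrableOn) (integrable_const 1).integrableOn
      (fun x => φ_le_one (A := A) (B := B) x)
  rw [setIntegral_const] at h
  simpa [Mw, Pw, measureReal_def] using h

lemma Mw_nonneg (s : Fin n → Bool) : 0 ≤ Mw A B s := ENNReal.toReal_nonneg

lemma Pw_zero_iff (hA : ∀ i, MeasurableSet (A i)) (hB : ∀ i, MeasurableSet (B i))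
    (s : Fin n → Bool) (hP : Pw A B s = 0) : μ (Zs A B s) = 0 := by
  have h : ∫ _x in Zs A B s, ((2⁻¹:ℝ) ^ n) ∂μ ≤ Pw A B s :=
    setIntegral_mono (integrable_const _).integrableOn ((integrable_φ hA hB).integrableOn)
      (fun x => φ_ge (A := A) (B := B) x)
  rw [setIntegral_const, hP] at h
  have hμfin : μ (Zs A B s) ≠ ⊤ := measure_ne_top μ _
  have h2 : (μ (Zs A B s)).toReal ≤ 0 := by
    have hpow : (0:ℝ) < (2⁻¹:ℝ) ^ n := by positivity
    rw [smul_eq_mul, measureReal_def] at h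
    nlinarith [ENNReal.toReal_nonneg (a := μ (Zs A B s))]
  have h3 : (μ (Zs A B s)).toReal = 0 := le_antisymm h2 ENNReal.toReal_nonneg
  exact (ENNReal.toReal_eq_zero_iff _).mp h3 |>.resolve_right hμfin

lemma indicator_mul_φ (S : Set ℝ) (g : ℝ → ℝ) (x : ℝ) :
    S.indicator g x = S.indicator (fun _ => (1:ℝ)) x * g x := by
  by_cases hx : x ∈ S <;> simp [hx]

lemma sum_Pw (hA : ∀ i, MeasurableSet (A i)) (hB : ∀ i, MeasurableSet (B i))
    (hd : ∀ i, Disjoint (A i) (B i)) : ∑ s : Fin n → Bool, Pw A B s = 1 := by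
  have h1 : ∀ s : Fin n → Bool, Pw A B s = ∫ x, (Zs A B s).indicator (φ A B) x ∂μ := by
    intro s
    rw [Pw, integral_indicator (measurable_Zs hA hB s)]
  simp only [h1]
  rw [← integral_finset_sum _ (fun s _ => ((integrable_φ hA hB).indicator
    (measurable_Zs hA hB s)))]
  have h2 : ∀ x : ℝ, ∑ s : Fin n → Bool, (Zs A B s).indicator (φ A B) x = 1 := by
    intro x
    calc ∑ s : Fin n → Bool, (Zs A B s).indicator (φ A B) x
        = ∑ s : Fin n → Bool, (Zs A B s).indicator (fun _ => (1:ℝ)) x * φ A B x :=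
          Finset.sum_congr rfl (fun s _ => indicator_mul_φ _ _ x)
      _ = η A B x * φ A B x := by rw [← Finset.sum_mul, sum_indicator_Zs hd x]
      _ = 1 := by rw [mul_comm]; exact φ_mul_η (A := A) (B := B) x
  simp only [h2]
  simp
/-- Measurability of the section-measure function. -/
lemma measurable_sectm (hA : ∀ i, MeasurableSet (A i)) (hB : ∀ i, MeasurableSet (B i)) :
    Measurable (fun x => (μ (Prod.mk x ⁻¹' Cpair A B)).toReal) :=
  (measurable_measure_prodMk_left (measurable_Cpair hA hB)).ennreal_toReal

lemma sectm_le_one (x : ℝ) : (μ (Prod.mk x ⁻¹' Cpair A B)).toReal ≤ 1 := by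
  have h : μ (Prod.mk x ⁻¹' Cpair A B) ≤ 1 := prob_le_one
  calc (μ (Prod.mk x ⁻¹' Cpair A B)).toReal ≤ (1:ℝ≥0∞).toReal :=
    ENNReal.toReal_mono (by simp) h
  _ = 1 := by simp

lemma sum_PwMw_le (hA : ∀ i, MeasurableSet (A i)) (hB : ∀ i, MeasurableSet (B i))
    (hd : ∀ i, Disjoint (A i) (B i)) :
    ∑ s : Fin n → Bool, Pw A B s * Mw A B s
      ≤ ∫ x, (μ (Prod.mk x ⁻¹' Cpair A B)).toReal ∂μ := by
  have h1 : ∀ s : Fin n → Bool, Pw A B s * Mw A B s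
      = ∫ x, (Zs A B s).indicator (φ A B) x * Mw A B s ∂μ := by
    intro s
    rw [integral_mul_const, Pw, integral_indicator (measurable_Zs hA hB s)]
  simp only [h1]
  rw [← integral_finset_sum _ (fun s _ => (((integrable_φ hA hB).indicator
    (measurable_Zs hA hB s)).mul_const _))]
  apply integral_mono _ _
  · intro x
    calc ∑ s : Fin n → Bool, (Zs A B s).indicator (φ A B) x * Mw A B s
        ≤ ∑ s : Fin n → Bool, (Zs A B s).indicator (φ A B) x
            * (μ (Prod.mk x ⁻¹' Cpair A B)).toReal := by
          apply Finset.sum_le_sum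
          intro s _
          by_cases hx : x ∈ Zs A B s
          · apply mul_le_mul_of_nonneg_left _ (Set.indicator_nonneg
              (fun y _ => le_of_lt (φ_pos (A := A) (B := B) y)) x)
            exact ENNReal.toReal_mono (measure_ne_top μ _)
              (measure_mono (Zs_subset_sect hx))
          · simp [Set.indicator_of_notMem hx]
      _ = (∑ s : Fin n → Bool, (Zs A B s).indicator (φ A B) x)
            * (μ (Prod.mk x ⁻¹' Cpair A B)).toReal := by rw [Finset.sum_mul]
      _ = (μ (Prod.mk x ⁻¹' Cpair A B)).toReal := by
          rw [show ∑ s : Fin n → Bool, (Zs A B s).indicator (φ A B) x = 1 from by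
            calc ∑ s : Fin n → Bool, (Zs A B s).indicator (φ A B) x
                = ∑ s : Fin n → Bool, (Zs A B s).indicator (fun _ => (1:ℝ)) x * φ A B x :=
                  Finset.sum_congr rfl (fun s _ => indicator_mul_φ _ _ x)
              _ = η A B x * φ A B x := by rw [← Finset.sum_mul, sum_indicator_Zs hd x]
              _ = 1 := by rw [mul_comm]; exact φ_mul_η (A := A) (B := B) x]
          ring
  · exact integrable_finset_sum _ (fun s _ => (((integrable_φ hA hB).indicator
      (measurable_Zs hA hB s)).mul_const _))
  · apply integrable_of_bdd (measurable_sectm hA hB) 1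
    intro x
    have h0 : (0:ℝ) ≤ (μ (Prod.mk x ⁻¹' Cpair A B)).toReal := ENNReal.toReal_nonneg
    exact abs_le.mpr ⟨by linarith, sectm_le_one x⟩

lemma integrable_φlogφ (hA : ∀ i, MeasurableSet (A i)) (hB : ∀ i, MeasurableSet (B i)) :
    Integrable (fun x => φ A B x * Real.log (φ A B x)) μ := by
  apply integrable_of_bdd ((measurable_φ hA hB).mul (Real.measurable_log.comp
    (measurable_φ hA hB))) (n * Real.log 2)
  intro x
  have h1 : |φ A B x| ≤ 1 := abs_le.mpr
    ⟨by linarith [φ_pos (A := A) (B := B) x], φ_le_one (A := A) (B := B) x⟩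
  have h2 := abs_logφ_le (A := A) (B := B) x
  calc |φ A B x * Real.log (φ A B x)| = |φ A B x| * |Real.log (φ A B x)| := abs_mul _ _
    _ ≤ 1 * (n * Real.log 2) := mul_le_mul h1 h2 (abs_nonneg _) zero_le_one
    _ = n * Real.log 2 := one_mul _

/-- The per-`s` log-sum (Jensen) inequality, proved by the tangent-line trick. -/
lemma logsum_step (hA : ∀ i, MeasurableSet (A i)) (hB : ∀ i, MeasurableSet (B i))
    (s : Fin n → Bool) (hP : 0 < Pw A B s) :
    Pw A B s * (Real.log (Pw A B s) - Real.log (Mw A B s))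
      ≤ ∫ x in Zs A B s, φ A B x * Real.log (φ A B x) ∂μ := by
  have hM : 0 < Mw A B s := lt_of_lt_of_le hP (Pw_le_Mw hA hB s)
  set t : ℝ := Pw A B s / Mw A B s with ht
  have ht0 : 0 < t := div_pos hP hM
  have key : ∀ x : ℝ, φ A B x * (1 + Real.log t) - t ≤ φ A B x * Real.log (φ A B x) := by
    intro x
    have h := log_tangent ht0 (φ_pos (A := A) (B := B) x)
    have hφ : 0 < φ A B x := φ_pos (A := A) (B := B) x
    have h2 : φ A B x * Real.log t ≤ φ A B x * Real.log (φ A B x) + (t - φ A B x) := by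
      have := mul_le_mul_of_nonneg_left h (le_of_lt hφ)
      rw [mul_add] at this
      calc φ A B x * Real.log t ≤ φ A B x * Real.log (φ A B x)
          + φ A B x * ((t - φ A B x) / φ A B x) := this
        _ = φ A B x * Real.log (φ A B x) + (t - φ A B x) := by
            rw [mul_div_cancel₀ _ (ne_of_gt hφ)]
    linarith
  have hint : ∫ x in Zs A B s, (φ A B x * (1 + Real.log t) - t) ∂μ
      = Pw A B s * (1 + Real.log t) - t * Mw A B s := by
    rw [integral_sub ((integrable_φ hA hB).integrableOn.mul_const _)
      (integrable_const t).integrableOn]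
    rw [integral_mul_const, setIntegral_const, smul_eq_mul, measureReal_def]
    simp only [Pw, Mw]
    ring
  have hmono : ∫ x in Zs A B s, (φ A B x * (1 + Real.log t) - t) ∂μ
      ≤ ∫ x in Zs A B s, φ A B x * Real.log (φ A B x) ∂μ := by
    apply setIntegral_mono (((integrable_φ hA hB).mul_const _).sub
      (integrable_const t)).integrableOn (integrable_φlogφ hA hB).integrableOn key
  rw [hint] at hmono
  have htM : t * Mw A B s = Pw A B s := div_mul_cancel₀ _ (ne_of_gt hM)
  have hlogt : Real.log t = Real.log (Pw A B s) - Real.log (Mw A B s) :=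
    Real.log_div (ne_of_gt hP) (ne_of_gt hM)
  nlinarith [hmono]

lemma sum_setIntegral_philog (hA : ∀ i, MeasurableSet (A i)) (hB : ∀ i, MeasurableSet (B i))
    (hd : ∀ i, Disjoint (A i) (B i)) :
    ∑ s : Fin n → Bool, ∫ x in Zs A B s, φ A B x * Real.log (φ A B x) ∂μ
      = ∫ x, Real.log (φ A B x) ∂μ := by
  have h1 : ∀ s : Fin n → Bool, ∫ x in Zs A B s, φ A B x * Real.log (φ A B x) ∂μ
      = ∫ x, (Zs A B s).indicator (fun x => φ A B x * Real.log (φ A B x)) x ∂μ := by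
    intro s
    rw [integral_indicator (measurable_Zs hA hB s)]
  simp only [h1]
  rw [← integral_finset_sum _ (fun s _ => ((integrable_φlogφ hA hB).indicator
    (measurable_Zs hA hB s)))]
  apply integral_congr_ae
  apply Filter.Eventually.of_forall
  intro x
  calc ∑ s : Fin n → Bool, (Zs A B s).indicator (fun x => φ A B x * Real.log (φ A B x)) x
      = ∑ s : Fin n → Bool, (Zs A B s).indicator (fun _ => (1:ℝ)) x
          * (φ A B x * Real.log (φ A B x)) :=
        Finset.sum_congr rfl (fun s _ => indicator_mul_φ _ _ x)
    _ = η A B x * (φ A B x * Real.log (φ A B x)) := by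
        rw [← Finset.sum_mul, sum_indicator_Zs hd x]
    _ = Real.log (φ A B x) := by
        rw [← mul_assoc, mul_comm (η A B x) (φ A B x), φ_mul_η (A := A) (B := B) x, one_mul]

lemma integral_logφ (hA : ∀ i, MeasurableSet (A i)) (hB : ∀ i, MeasurableSet (B i)) :
    ∫ x, Real.log (φ A B x) ∂μ
      = Real.log 2 * (∑ i, (μ (A i ∪ B i)).toReal) - n * Real.log 2 := by
  have h1 : ∀ x : ℝ, Real.log (φ A B x)
      = ∑ i, (if x ∈ A i ∪ B i then (0:ℝ) else -Real.log 2) := by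
    intro x
    rw [φ, Real.log_prod (fun i _ => by split <;> norm_num)]
    apply Finset.sum_congr rfl
    intro i _
    split
    · exact Real.log_one
    · rw [Real.log_inv]
  simp only [h1]
  have hint : ∀ i : Fin n, Integrable
      (fun x => if x ∈ A i ∪ B i then (0:ℝ) else -Real.log 2) μ := by
    intro i
    apply integrable_of_bdd (Measurable.ite ((hA i).union (hB i))
      measurable_const measurable_const) (Real.log 2)
    intro x
    have hl2 : (0:ℝ) ≤ Real.log 2 := Real.log_nonneg one_le_two
    split <;> simp [abs_of_nonneg hl2, hl2]
  rw [integral_finset_sum Finset.univ (fun i _ => hint i)]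
  have h2 : ∀ i : Fin n, ∫ x, (if x ∈ A i ∪ B i then (0:ℝ) else -Real.log 2) ∂μ
      = -Real.log 2 * (1 - (μ (A i ∪ B i)).toReal) := by
    intro i
    have hS : MeasurableSet (A i ∪ B i) := (hA i).union (hB i)
    have : ∀ x : ℝ, (if x ∈ A i ∪ B i then (0:ℝ) else -Real.log 2)
        = ((A i ∪ B i)ᶜ).indicator (fun _ => -Real.log 2) x := by
      intro x
      by_cases hx : x ∈ A i ∪ B i
      · rw [if_pos hx, Set.indicator_of_notMem (Set.notMem_compl_iff.mpr hx)]
      · rw [if_neg hx, Set.indicator_of_mem (by simpa using hx)]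
    simp only [this]
    rw [integral_indicator hS.compl, setIntegral_const, smul_eq_mul]
    have hcompl : μ ((A i ∪ B i)ᶜ) = 1 - μ (A i ∪ B i) := by
      rw [measure_compl hS (measure_ne_top μ _), μ_univ]
    rw [measureReal_def, hcompl, ENNReal.toReal_sub_of_le prob_le_one (by simp)]
    simp [mul_comm]
  simp only [h2]
  rw [Finset.sum_congr rfl (fun i _ => by ring_nf : ∀ i ∈ Finset.univ,
    -Real.log 2 * (1 - (μ (A i ∪ B i)).toReal)
      = Real.log 2 * (μ (A i ∪ B i)).toReal - Real.log 2)]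
  rw [Finset.sum_sub_distrib, Finset.sum_const, ← Finset.mul_sum]
  simp [Finset.card_univ, mul_comm]

/-- The core (finite) Hansel inequality. -/
theorem core_ineq (hA : ∀ i, MeasurableSet (A i)) (hB : ∀ i, MeasurableSet (B i))
    (hd : ∀ i, Disjoint (A i) (B i)) :
    ENNReal.ofReal (Real.exp (-(Real.log 2 * ∑ i, (μ (A i ∪ B i)).toReal)))
      ≤ μ.prod μ (Cpair A B) := by
  classical
  set Q : Finset (Fin n → Bool) := Finset.univ.filter (fun s => 0 < Pw A B s) with hQ
  -- sum of P over Q is 1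
  have hPQ : ∑ s ∈ Q, Pw A B s = 1 := by
    rw [← sum_Pw hA hB hd]
    apply Finset.sum_subset (Finset.filter_subset _ _)
    intro s _ hs
    rw [Finset.mem_filter] at hs
    push_neg at hs
    have := hs (Finset.mem_univ s)
    linarith [Pw_nonneg hA hB s]
  have hQne : Q.Nonempty := by
    by_contra hQe
    rw [Finset.not_nonempty_iff_eq_empty] at hQe
    rw [hQe, Finset.sum_empty] at hPQ
    norm_num at hPQ
  -- positivity on Q
  have hPpos : ∀ s ∈ Q, 0 < Pw A B s := by
    intro s hs; rw [hQ, Finset.mem_filter] at hs; exact hs.2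
  have hMpos : ∀ s ∈ Q, 0 < Mw A B s := fun s hs =>
    lt_of_lt_of_le (hPpos s hs) (Pw_le_Mw hA hB s)
  -- V = Σ_Q P·M > 0
  set V : ℝ := ∑ s ∈ Q, Pw A B s * Mw A B s with hV
  have hVpos : 0 < V := by
    obtain ⟨s₀, hs₀⟩ := hQne
    apply Finset.sum_pos' (fun s hs => mul_nonneg (le_of_lt (hPpos s hs))
      (le_of_lt (hMpos s hs)))
    exact ⟨s₀, hs₀, mul_pos (hPpos s₀ hs₀) (hMpos s₀ hs₀)⟩
  -- Jensen: Σ_Q P·log M ≤ log V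
  have hJ : ∑ s ∈ Q, Pw A B s * Real.log (Mw A B s) ≤ Real.log V := by
    have htan : ∀ s ∈ Q, Pw A B s * Real.log (Mw A B s)
        ≤ Pw A B s * Real.log V + (Pw A B s * Mw A B s - Pw A B s * V) / V := by
      intro s hs
      have h := log_tangent (hMpos s hs) hVpos
      have h2 := mul_le_mul_of_nonneg_left h (le_of_lt (hPpos s hs))
      rw [mul_add] at h2
      calc Pw A B s * Real.log (Mw A B s)
          ≤ Pw A B s * Real.log V + Pw A B s * ((Mw A B s - V) / V) := h2
        _ = Pw A B s * Real.log V + (Pw A B s * Mw A B s - Pw A B s * V) / V := by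
            ring
    calc ∑ s ∈ Q, Pw A B s * Real.log (Mw A B s)
        ≤ ∑ s ∈ Q, (Pw A B s * Real.log V + (Pw A B s * Mw A B s - Pw A B s * V) / V) :=
          Finset.sum_le_sum htan
      _ = (∑ s ∈ Q, Pw A B s) * Real.log V
          + ((∑ s ∈ Q, Pw A B s * Mw A B s) - (∑ s ∈ Q, Pw A B s) * V) / V := by
          rw [Finset.sum_add_distrib, ← Finset.sum_mul, ← Finset.sum_div,
            Finset.sum_sub_distrib, ← Finset.sum_mul]
      _ = Real.log V := by
          rw [hPQ, ← hV]
          field_simp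
          ring
  -- entropy: Σ_Q P·log P ≥ -(n log 2)
  have hEnt : -(n * Real.log 2) ≤ ∑ s ∈ Q, Pw A B s * Real.log (Pw A B s) := by
    have hcard : (0:ℝ) < Q.card := by
      have := Finset.card_pos.mpr hQne
      exact_mod_cast this
    have htan : ∀ s ∈ Q, Pw A B s * Real.log (Pw A B s)⁻¹
        ≤ Pw A B s * Real.log Q.card + (1 - Q.card * Pw A B s) / Q.card := by
      intro s hs
      have h := log_tangent (u := (Pw A B s)⁻¹) (v := (Q.card : ℝ))
        (inv_pos.mpr (hPpos s hs)) hcard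
      have h2 := mul_le_mul_of_nonneg_left h (le_of_lt (hPpos s hs))
      rw [mul_add] at h2
      calc Pw A B s * Real.log (Pw A B s)⁻¹
          ≤ Pw A B s * Real.log Q.card + Pw A B s * (((Pw A B s)⁻¹ - Q.card) / Q.card) := h2
        _ = Pw A B s * Real.log Q.card + (1 - Q.card * Pw A B s) / Q.card := by
            rw [mul_div_assoc', mul_sub, mul_inv_cancel₀ (ne_of_gt (hPpos s hs))]
            ring
    have hsum : ∑ s ∈ Q, Pw A B s * Real.log (Pw A B s)⁻¹ ≤ Real.log Q.card := by
      calc ∑ s ∈ Q, Pw A B s * Real.log (Pw A B s)⁻¹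
          ≤ ∑ s ∈ Q, (Pw A B s * Real.log Q.card + (1 - Q.card * Pw A B s) / Q.card) :=
            Finset.sum_le_sum htan
        _ = (∑ s ∈ Q, Pw A B s) * Real.log Q.card
            + ((Q.card : ℝ) - Q.card * ∑ s ∈ Q, Pw A B s) / Q.card := by
            rw [Finset.sum_add_distrib, ← Finset.sum_mul, ← Finset.sum_div,
              Finset.sum_sub_distrib, Finset.sum_const, ← Finset.mul_sum]
            simp
        _ = Real.log Q.card := by
            rw [hPQ]
            field_simp
            ring
    have hcard2n : (Q.card : ℝ) ≤ 2 ^ n := by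
      have h1 : Q.card ≤ Fintype.card (Fin n → Bool) := Finset.card_le_univ Q
      have h2 : Fintype.card (Fin n → Bool) = 2 ^ n := by
        simp [Fintype.card_fun]
      rw [h2] at h1
      exact_mod_cast h1
    have hlogcard : Real.log Q.card ≤ n * Real.log 2 := by
      calc Real.log Q.card ≤ Real.log (2 ^ n) := Real.log_le_log hcard hcard2n
        _ = n * Real.log 2 := by rw [Real.log_pow]
    have : ∑ s ∈ Q, Pw A B s * Real.log (Pw A B s)⁻¹
        = -∑ s ∈ Q, Pw A B s * Real.log (Pw A B s) := by
      rw [← Finset.sum_neg_distrib]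
      apply Finset.sum_congr rfl
      intro s _
      rw [Real.log_inv]
      ring
    rw [this] at hsum
    linarith
  -- log-sum inequality summed over Q
  have hLS : ∑ s ∈ Q, (Pw A B s * Real.log (Pw A B s) - Pw A B s * Real.log (Mw A B s))
      ≤ Real.log 2 * (∑ i, (μ (A i ∪ B i)).toReal) - n * Real.log 2 := by
    have hstep : ∀ s ∈ Q, Pw A B s * Real.log (Pw A B s) - Pw A B s * Real.log (Mw A B s)
        ≤ ∫ x in Zs A B s, φ A B x * Real.log (φ A B x) ∂μ := by
      intro s hs
      have := logsum_step hA hB s (hPpos s hs)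
      linarith [this, mul_sub (Pw A B s) (Real.log (Pw A B s)) (Real.log (Mw A B s))]
    calc ∑ s ∈ Q, (Pw A B s * Real.log (Pw A B s) - Pw A B s * Real.log (Mw A B s))
        ≤ ∑ s ∈ Q, ∫ x in Zs A B s, φ A B x * Real.log (φ A B x) ∂μ :=
          Finset.sum_le_sum hstep
      _ = ∑ s : Fin n → Bool, ∫ x in Zs A B s, φ A B x * Real.log (φ A B x) ∂μ := by
          apply Finset.sum_subset (Finset.filter_subset _ _)
          intro s _ hs
          rw [Finset.mem_filter] at hs
          push_neg at hs
          have hP0 : Pw A B s = 0 := le_antisymm (hs (Finset.mem_univ s)) (Pw_nonneg hA hB s)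
          have hZ0 : μ (Zs A B s) = 0 := Pw_zero_iff hA hB s hP0
          rw [Measure.restrict_eq_zero.mpr hZ0]
          exact integral_zero_measure _
      _ = Real.log 2 * (∑ i, (μ (A i ∪ B i)).toReal) - n * Real.log 2 := by
          rw [sum_setIntegral_philog hA hB hd, integral_logφ hA hB]
  -- combine
  have hkey : -(Real.log 2 * ∑ i, (μ (A i ∪ B i)).toReal)
      ≤ ∑ s ∈ Q, Pw A B s * Real.log (Mw A B s) := by
    have h1 : ∑ s ∈ Q, Pw A B s * Real.log (Mw A B s)
        = ∑ s ∈ Q, Pw A B s * Real.log (Pw A B s)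
          - ∑ s ∈ Q, (Pw A B s * Real.log (Pw A B s) - Pw A B s * Real.log (Mw A B s)) := by
      rw [← Finset.sum_sub_distrib]
      apply Finset.sum_congr rfl
      intro s _
      ring
    rw [h1]
    linarith
  have hexp : Real.exp (-(Real.log 2 * ∑ i, (μ (A i ∪ B i)).toReal)) ≤ V := by
    calc Real.exp (-(Real.log 2 * ∑ i, (μ (A i ∪ B i)).toReal))
        ≤ Real.exp (∑ s ∈ Q, Pw A B s * Real.log (Mw A B s)) := Real.exp_le_exp.mpr hkey
      _ ≤ Real.exp (Real.log V) := Real.exp_le_exp.mpr hJ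
      _ = V := Real.exp_log hVpos
  have hVle1 : V ≤ ∑ s : Fin n → Bool, Pw A B s * Mw A B s := by
    rw [hV]
    apply Finset.sum_le_sum_of_subset_of_nonneg (Finset.filter_subset _ _)
    intro s _ _
    exact mul_nonneg (Pw_nonneg hA hB s) (Mw_nonneg s)
  have hVle : V ≤ ∫ x, (μ (Prod.mk x ⁻¹' Cpair A B)).toReal ∂μ :=
    le_trans hVle1 (sum_PwMw_le hA hB hd)
  -- convert to the product measure
  have hprod : μ.prod μ (Cpair A B) = ∫⁻ x, μ (Prod.mk x ⁻¹' Cpair A B) ∂μ :=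
    Measure.prod_apply (measurable_Cpair hA hB)
  have hint : ∫ x, (μ (Prod.mk x ⁻¹' Cpair A B)).toReal ∂μ
      = (∫⁻ x, μ (Prod.mk x ⁻¹' Cpair A B) ∂μ).toReal := by
    apply integral_toReal
    · exact (measurable_measure_prodMk_left (measurable_Cpair hA hB)).aemeasurable
    · exact Filter.Eventually.of_forall (fun x => lt_of_le_of_lt prob_le_one
        ENNReal.one_lt_top)
  apply ENNReal.ofReal_le_of_le_toReal
  rw [hprod, ← hint]
  exact le_trans hexp hVle

end core

end GH

open GH

theorem graphon_hansel_unweighted (ε : ℝ) (hε₀ : 0 < ε) (hε₁ : ε ≤ 1)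
    (W : ℕ → ℝ → ℝ → ℝ) (A B : ℕ → Set ℝ)
    (hWmeas : ∀ i, Measurable (Function.uncurry (W i)))
    (hWsymm : ∀ i x y, W i x y = W i y x)
    (hWrange : ∀ i x y, W i x y ∈ Set.Icc (0 : ℝ) 1)
    (hAmeas : ∀ i, MeasurableSet (A i)) (hBmeas : ∀ i, MeasurableSet (B i))
    (hAsub : ∀ i, A i ⊆ Set.Icc (0 : ℝ) 1) (hBsub : ∀ i, B i ⊆ Set.Icc (0 : ℝ) 1)
    (hABdisj : ∀ i, volume (A i ∩ B i) = 0)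
    (hbip : ∀ i, volume ({p : ℝ × ℝ | p ∈ Set.Icc (0 : ℝ) 1 ×ˢ Set.Icc (0 : ℝ) 1
        ∧ W i p.1 p.2 ≠ 0} \ ((A i ×ˢ B i) ∪ (B i ×ˢ A i))) = 0)
    (hfull : ENNReal.ofReal (1 - ε) ≤
      ∫⁻ p in (Set.Icc (0 : ℝ) 1 ×ˢ Set.Icc (0 : ℝ) 1),
        min 1 (∑' i, ENNReal.ofReal (W i p.1 p.2))) :
    ENNReal.ofReal (Real.logb 2 (1 / ε)) ≤ ∑' i, volume (A i ∪ B i) := by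
  classical
  by_cases htop : ∑' i, volume (A i ∪ B i) = ⊤
  · rw [htop]; exact le_top
  -- basic notation
  set c : ℕ → ℝ≥0∞ := fun i => volume (A i ∪ B i) with hc
  have hcfin : ∀ i, c i ≠ ⊤ := fun i => ne_top_of_le_ne_top htop (ENNReal.le_tsum i)
  set r : ℕ → ℝ := fun i => (c i).toReal with hr
  have hrsum : Summable r := ENNReal.summable_toReal htop
  have hrnonneg : ∀ i, 0 ≤ r i := fun i => ENNReal.toReal_nonneg
  -- disjointify
  set B' : ℕ → Set ℝ := fun i => B i \ A i with hB'def
  have hB'meas : ∀ i, MeasurableSet (B' i) := fun i => (hBmeas i).diff (hAmeas i)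
  have hdisj : ∀ i, Disjoint (A i) (B' i) := fun i => disjoint_sdiff_self_right
  have hunion : ∀ i, A i ∪ B' i = A i ∪ B i := fun i => union_diff_self
  have hvolB' : ∀ i, volume (A i) + volume (B' i) = c i := by
    intro i
    show volume (A i) + volume (B' i) = volume (A i ∪ B i)
    rw [← hunion i, measure_union (hdisj i) (hB'meas i)]
  -- ambient objects
  set box : Set (ℝ × ℝ) := Icc (0:ℝ) 1 ×ˢ Icc (0:ℝ) 1 with hbox
  have hboxmeas : MeasurableSet box := measurableSet_Icc.prod measurableSet_Icc
  set ρ : Measure (ℝ × ℝ) := (volume : Measure (ℝ × ℝ)).restrict box with hρ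
  have hρuniv : ρ univ = 1 := by
    rw [hρ, Measure.restrict_apply_univ, hbox, Measure.volume_eq_prod ℝ ℝ, Measure.prod_prod,
      Real.volume_Icc]
    norm_num
  haveI : IsFiniteMeasure ρ := ⟨by rw [hρuniv]; exact ENNReal.one_lt_top⟩
  have hμprod : GH.μ.prod GH.μ = ρ := by
    rw [hρ, hbox, GH.μ, Measure.prod_restrict, ← Measure.volume_eq_prod ℝ ℝ]
  have hρle : ∀ S : Set (ℝ × ℝ), MeasurableSet S → ρ S ≤ volume S := by
    intro S hS
    rw [hρ, Measure.restrict_apply hS]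
    exact measure_mono Set.inter_subset_left
  -- the rectangles
  set rect : ℕ → Set (ℝ × ℝ) := fun i => A i ×ˢ B' i ∪ B' i ×ˢ A i with hrect
  have hrectmeas : ∀ i, MeasurableSet (rect i) :=
    fun i => ((hAmeas i).prod (hB'meas i)).union ((hB'meas i).prod (hAmeas i))
  have hrectvol : ∀ i, volume (rect i) ≤ c i := by
    intro i
    have hA1 : volume (A i) ≤ 1 := by
      have h : volume (A i) ≤ volume (Icc (0:ℝ) 1) := measure_mono (hAsub i)
      rwa [Real.volume_Icc, sub_zero, ENNReal.ofReal_one] at h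
    have hB1 : volume (B' i) ≤ 1 := by
      have h : volume (B' i) ≤ volume (Icc (0:ℝ) 1) :=
        measure_mono (fun x hx => hBsub i (Set.diff_subset hx))
      rwa [Real.volume_Icc, sub_zero, ENNReal.ofReal_one] at h
    calc volume (rect i) ≤ volume (A i ×ˢ B' i) + volume (B' i ×ˢ A i) := measure_union_le _ _
      _ = volume (A i) * volume (B' i) + volume (B' i) * volume (A i) := by
          rw [Measure.volume_eq_prod ℝ ℝ, Measure.prod_prod, Measure.prod_prod]
      _ ≤ volume (A i) * 1 + volume (B' i) * 1 := by
          gcongr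
      _ = volume (A i) + volume (B' i) := by rw [mul_one, mul_one]
      _ = c i := hvolB' i
  -- the compatible sets
  set Cn : ℕ → Set (ℝ × ℝ) := fun n => Cpair (fun i : Fin n => A i.val)
    (fun i : Fin n => B' i.val) with hCn
  have hCnmeas : ∀ n, MeasurableSet (Cn n) :=
    fun n => measurable_Cpair (fun i => hAmeas i.val) (fun i => hB'meas i.val)
  -- a.e. support statement
  have haeW : ∀ i : ℕ, ∀ᵐ p ∂ρ, (W i p.1 p.2 ≠ 0 → p ∈ rect i) := by
    intro i
    have hsub1 : (A i ×ˢ B i ∪ B i ×ˢ A i) \ rect i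
        ⊆ (univ ×ˢ (A i ∩ B i)) ∪ ((A i ∩ B i) ×ˢ univ) := by
      rintro ⟨x, y⟩ ⟨hp1, hp2⟩
      simp only [hrect, Set.mem_union, Set.mem_prod] at hp1 hp2
      push_neg at hp2
      rcases hp1 with ⟨hx, hy⟩ | ⟨hx, hy⟩
      · rcases hp2 with ⟨h1, _⟩
        have hnB' := h1 hx
        have hyA : y ∈ A i := by
          by_contra hy'
          exact hnB' ⟨hy, hy'⟩
        exact Or.inl ⟨trivial, hyA, hy⟩
      · rcases hp2 with ⟨_, h2⟩
        have hxA : x ∈ A i := by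
          by_contra hx'
          exact h2 ⟨hx, hx'⟩ hy
        exact Or.inr ⟨⟨hxA, hx⟩, trivial⟩
    have hext : volume ((A i ×ˢ B i ∪ B i ×ˢ A i) \ rect i) = 0 := by
      apply measure_mono_null hsub1
      apply measure_union_null
      · rw [Measure.volume_eq_prod ℝ ℝ, Measure.prod_prod, hABdisj i, mul_zero]
      · rw [Measure.volume_eq_prod ℝ ℝ, Measure.prod_prod, hABdisj i, zero_mul]
    have hsub2 : ({p : ℝ × ℝ | p ∈ box ∧ W i p.1 p.2 ≠ 0}) \ rect i
        ⊆ ({p : ℝ × ℝ | p ∈ box ∧ W i p.1 p.2 ≠ 0}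
          \ (A i ×ˢ B i ∪ B i ×ˢ A i)) ∪ ((A i ×ˢ B i ∪ B i ×ˢ A i) \ rect i) := by
      intro p hp
      by_cases hmem : p ∈ A i ×ˢ B i ∪ B i ×ˢ A i
      · exact Or.inr ⟨hmem, hp.2⟩
      · exact Or.inl ⟨hp.1, hmem⟩
    have hbad : volume (({p : ℝ × ℝ | p ∈ box ∧ W i p.1 p.2 ≠ 0}) \ rect i) = 0 :=
      measure_mono_null hsub2 (measure_union_null (hbip i) hext)
    have hρbad : ρ (({p : ℝ × ℝ | p ∈ box ∧ W i p.1 p.2 ≠ 0}) \ rect i) = 0 := by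
      apply le_antisymm _ zero_le
      rw [← hbad, hρ]
      exact Measure.restrict_apply_le _ _
    have hbox_ae : ∀ᵐ p ∂ρ, p ∈ box := ae_restrict_mem hboxmeas
    have h2 : ∀ᵐ p ∂ρ, p ∉ (({p : ℝ × ℝ | p ∈ box ∧ W i p.1 p.2 ≠ 0}) \ rect i) :=
      measure_eq_zero_iff_ae_notMem.mp hρbad
    filter_upwards [hbox_ae, h2] with p hp hnp hW
    by_contra hrect'
    exact hnp ⟨⟨hp, hW⟩, hrect'⟩
  -- step 1: for every n, ofReal (1-ε) + ρ (Cn n) ≤ 1 + tail n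
  set tail : ℕ → ℝ≥0∞ := fun n => ∑' k, c (k + n) with htail
  have htail_le : ∀ n, tail n ≤ ∑' i, c i := by
    intro n
    rw [← Summable.sum_add_tsum_nat_add' (f := c) (k := n) ENNReal.summable]
    have : tail n = ∑' k, c (k + n) := rfl
    rw [this]
    have : (∑' (k : ℕ), c (k + n)) = ∑' (k : ℕ), c (k + n) := rfl
    exact le_add_self
  have h1 : ∀ n : ℕ, ENNReal.ofReal (1 - ε) + ρ (Cn n) ≤ 1 + tail n := by
    intro n
    -- a.e. pointwise bound
    have hptwise : ∀ᵐ p ∂ρ, min 1 (∑' i, ENNReal.ofReal (W i p.1 p.2))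
        ≤ (Cn n)ᶜ.indicator (fun _ => (1:ℝ≥0∞)) p
          + ∑' k, ENNReal.ofReal (W (k + n) p.1 p.2) := by
      have hall : ∀ᵐ p ∂ρ, ∀ i : ℕ, (W i p.1 p.2 ≠ 0 → p ∈ rect i) := ae_all_iff.mpr haeW
      filter_upwards [hall] with p hp
      by_cases hpC : p ∈ Cn n
      · have hWzero : ∀ k : ℕ, k < n → W k p.1 p.2 = 0 := by
          intro k hk
          by_contra hWk
          have hrectk := hp k hWk
          rw [hCn, mem_Cpair] at hpC
          have := hpC ⟨k, hk⟩
          simp only [hrect, Set.mem_union, Set.mem_prod] at hrectk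
          rcases hrectk with ⟨h1', h2'⟩ | ⟨h1', h2'⟩
          · exact this.1 ⟨h1', h2'⟩
          · exact this.2 ⟨h1', h2'⟩
        have hsplit : (∑' i, ENNReal.ofReal (W i p.1 p.2))
            = ∑' k, ENNReal.ofReal (W (k + n) p.1 p.2) := by
          rw [← Summable.sum_add_tsum_nat_add' (f := fun i => ENNReal.ofReal (W i p.1 p.2))
            (k := n) ENNReal.summable]
          rw [Finset.sum_eq_zero, zero_add]
          intro k hk
          rw [Finset.mem_range] at hk
          rw [hWzero k hk, ENNReal.ofReal_zero]
        rw [hsplit]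
        exact le_add_left (min_le_right _ _)
      · rw [Set.indicator_of_mem (Set.mem_compl hpC)]
        exact le_add_right (min_le_left _ _)
    -- integrate
    have hint1 : (∫⁻ p in box, min 1 (∑' i, ENNReal.ofReal (W i p.1 p.2)))
        ≤ ∫⁻ p, ((Cn n)ᶜ.indicator (fun _ => (1:ℝ≥0∞)) p
            + ∑' k, ENNReal.ofReal (W (k + n) p.1 p.2)) ∂ρ := lintegral_mono_ae hptwise
    have hint2 : ∫⁻ p, ((Cn n)ᶜ.indicator (fun _ => (1:ℝ≥0∞)) p
          + ∑' k, ENNReal.ofReal (W (k + n) p.1 p.2)) ∂ρ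
        = ρ ((Cn n)ᶜ) + ∫⁻ p, (∑' k, ENNReal.ofReal (W (k + n) p.1 p.2)) ∂ρ := by
      rw [lintegral_add_left (measurable_const.indicator (hCnmeas n).compl)]
      congr 1
      rw [lintegral_indicator (hCnmeas n).compl]
      simp
    have hint3 : ∫⁻ p, (∑' k, ENNReal.ofReal (W (k + n) p.1 p.2)) ∂ρ ≤ tail n := by
      rw [lintegral_tsum (f := fun (k : ℕ) (p : ℝ × ℝ) => ENNReal.ofReal (W (k + n) p.1 p.2))
        (fun k => (Measurable.ennreal_ofReal (hWmeas (k + n))).aemeasurable)]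
      apply ENNReal.tsum_le_tsum
      intro k
      have haebound : ∀ᵐ p ∂ρ, ENNReal.ofReal (W (k + n) p.1 p.2)
          ≤ (rect (k + n)).indicator (fun _ => (1:ℝ≥0∞)) p := by
        filter_upwards [haeW (k + n)] with p hp
        by_cases hW0 : W (k + n) p.1 p.2 = 0
        · rw [hW0]
          simp
        · rw [Set.indicator_of_mem (hp hW0)]
          exact ENNReal.ofReal_le_one.mpr (hWrange (k + n) p.1 p.2).2
      calc ∫⁻ p, ENNReal.ofReal (W (k + n) p.1 p.2) ∂ρ
          ≤ ∫⁻ p, (rect (k + n)).indicator (fun _ => (1:ℝ≥0∞)) p ∂ρ :=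
            lintegral_mono_ae haebound
        _ = ρ (rect (k + n)) := by
            rw [lintegral_indicator (hrectmeas (k + n))]
            simp
        _ ≤ volume (rect (k + n)) := hρle _ (hrectmeas (k + n))
        _ ≤ c (k + n) := hrectvol (k + n)
    have hcompl : ρ ((Cn n)ᶜ) = 1 - ρ (Cn n) := by
      rw [measure_compl (hCnmeas n) (measure_ne_top ρ _), hρuniv]
    have hchain : ENNReal.ofReal (1 - ε) ≤ 1 - ρ (Cn n) + tail n := by
      calc ENNReal.ofReal (1 - ε)
          ≤ ∫⁻ p in box, min 1 (∑' i, ENNReal.ofReal (W i p.1 p.2)) := hfull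
        _ ≤ _ := hint1
        _ = ρ ((Cn n)ᶜ) + ∫⁻ p, (∑' k, ENNReal.ofReal (W (k + n) p.1 p.2)) ∂ρ := hint2
        _ ≤ (1 - ρ (Cn n)) + tail n := by
            rw [hcompl]
            exact add_le_add_right hint3 _
    have hCnle1 : ρ (Cn n) ≤ 1 := by
      rw [← hρuniv]
      exact measure_mono (Set.subset_univ _)
    calc ENNReal.ofReal (1 - ε) + ρ (Cn n) ≤ (1 - ρ (Cn n) + tail n) + ρ (Cn n) :=
        add_le_add_left hchain _
      _ = (1 - ρ (Cn n) + ρ (Cn n)) + tail n := by ring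
      _ = 1 + tail n := by rw [tsub_add_cancel_of_le hCnle1]
  -- step 2: core inequality for each n
  have h2 : ∀ n : ℕ, ENNReal.ofReal (Real.exp (-(Real.log 2 * ∑ i ∈ Finset.range n, r i)))
      ≤ ρ (Cn n) := by
    intro n
    have hcore := core_ineq (A := fun i : Fin n => A i.val) (B := fun i : Fin n => B' i.val)
      (fun i => hAmeas i.val) (fun i => hB'meas i.val) (fun i => hdisj i.val)
    rw [hμprod] at hcore
    refine le_trans ?_ hcore
    apply ENNReal.ofReal_le_ofReal
    apply Real.exp_le_exp.mpr
    apply neg_le_neg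
    apply mul_le_mul_of_nonneg_left _ (Real.log_nonneg one_le_two)
    rw [← Fin.sum_univ_eq_sum_range r n]
    apply Finset.sum_le_sum
    intro i _
    have hle : GH.μ (A i.val ∪ B' i.val) ≤ c i.val := by
      have h1 : GH.μ (A i.val ∪ B' i.val) ≤ volume (A i.val ∪ B' i.val) := μ_le_vol _
      have h2 : volume (A i.val ∪ B' i.val) = c i.val := congrArg volume (hunion i.val)
      exact h2 ▸ h1
    exact ENNReal.toReal_mono (hcfin i.val) hle
  -- step 3: real inequality for each n
  have h3 : ∀ n : ℕ, Real.exp (-(Real.log 2 * ∑ i ∈ Finset.range n, r i))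
      ≤ ε + (tail n).toReal := by
    intro n
    have htailfin : tail n ≠ ⊤ := ne_top_of_le_ne_top htop (htail_le n)
    have hcomb : ENNReal.ofReal (Real.exp (-(Real.log 2 * ∑ i ∈ Finset.range n, r i)))
        + ENNReal.ofReal (1 - ε) ≤ 1 + tail n := by
      calc ENNReal.ofReal (Real.exp (-(Real.log 2 * ∑ i ∈ Finset.range n, r i)))
          + ENNReal.ofReal (1 - ε) ≤ ρ (Cn n) + ENNReal.ofReal (1 - ε) :=
            add_le_add_left (h2 n) _
        _ = ENNReal.ofReal (1 - ε) + ρ (Cn n) := add_comm _ _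
        _ ≤ 1 + tail n := h1 n
    have hLHSfin : ENNReal.ofReal (Real.exp (-(Real.log 2 * ∑ i ∈ Finset.range n, r i)))
        + ENNReal.ofReal (1 - ε) ≠ ⊤ := by
      exact ENNReal.add_ne_top.mpr ⟨ENNReal.ofReal_ne_top, ENNReal.ofReal_ne_top⟩
    have := ENNReal.toReal_mono (ENNReal.add_ne_top.mpr ⟨ENNReal.one_ne_top, htailfin⟩) hcomb
    rw [ENNReal.toReal_add ENNReal.ofReal_ne_top ENNReal.ofReal_ne_top,
      ENNReal.toReal_add ENNReal.one_ne_top htailfin,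
      ENNReal.toReal_ofReal (le_of_lt (Real.exp_pos _)),
      ENNReal.toReal_ofReal (by linarith), ENNReal.toReal_one] at this
    linarith
  -- step 4: take the limit
  set R : ℝ := ∑' i, r i with hR
  have hlim1 : Filter.Tendsto (fun n => Real.exp (-(Real.log 2 * ∑ i ∈ Finset.range n, r i)))
      Filter.atTop (nhds (Real.exp (-(Real.log 2 * R)))) := by
    apply (Real.continuous_exp.tendsto _).comp
    exact (hrsum.hasSum.tendsto_sum_nat.const_mul (Real.log 2)).neg
  have hlim2 : Filter.Tendsto (fun n => ε + (tail n).toReal) Filter.atTop (nhds ε) := by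
    have ht0 : Filter.Tendsto (fun n => tail n) Filter.atTop (nhds 0) :=
      ENNReal.tendsto_sum_nat_add c htop
    have ht1 : Filter.Tendsto (fun n => (tail n).toReal) Filter.atTop (nhds 0) := by
      have := (ENNReal.tendsto_toReal (a := 0) (by simp)).comp ht0
      simpa [Function.comp_def] using this
    simpa using ht1.const_add ε
  have hfinal : Real.exp (-(Real.log 2 * R)) ≤ ε := le_of_tendsto_of_tendsto' hlim1 hlim2 h3
  -- step 5: conclude
  apply ENNReal.ofReal_le_of_le_toReal
  rw [ENNReal.tsum_toReal_eq hcfin]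
  have hlog2pos : 0 < Real.log 2 := Real.log_pos one_lt_two
  have hloge : -(Real.log 2 * R) ≤ Real.log ε := by
    have := Real.log_le_log (Real.exp_pos _) hfinal
    rwa [Real.log_exp] at this
  rw [Real.logb, Real.log_div one_ne_zero (ne_of_gt hε₀), Real.log_one]
  rw [div_le_iff₀ hlog2pos]
  have hRsum : ∑' i, r i = R := rfl
  nlinarith [hloge]
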